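/- Tail decay of the adjusted likelihood for I^{(c)}. Fix a real number z, y ∈ ℝ^m, and an index i with 1 ≤ i ≤ m. The function A^{(1+z²)/4}·(A+D_i)^{(7−z²)/4}·L_RE(A) is bounded above by det(XᵀX)^{−1/2}·A^{(1+z²)/4}·(A+D_i)^{(7−z²)/4}·(A+max_j D_j)^{p/2}·(A+min_j D_j)^{−m/2}, which is O(A^{2−(m−p)/2}) as A → ∞; in particular, if m > p + 4, then A^{(1+z²)/4}·(A+D_i)^{(7−z²)/4}·L_RE(A) → 0 as A → ∞. -/

import Mathlib

open Matrix Real Filter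

/-- The diagonal covariance matrix `V(A) = diag(A + D₁, …, A + D_m)`. -/
noncomputable def Vmat {m : ℕ} (D : Fin m → ℝ) (A : ℝ) : Matrix (Fin m) (Fin m) ℝ :=
  Matrix.diagonal (fun i => A + D i)

/-- The residual projection matrix `P(A) = V⁻¹ − V⁻¹X(XᵀV⁻¹X)⁻¹XᵀV⁻¹`. -/
noncomputable def Pmat {m p : ℕ} (X : Matrix (Fin m) (Fin p) ℝ) (D : Fin m → ℝ) (A : ℝ) :
    Matrix (Fin m) (Fin m) ℝ :=
  (Vmat D A)⁻¹ - (Vmat D A)⁻¹ * X * (Xᵀ * (Vmat D A)⁻¹ * X)⁻¹ * Xᵀ * (Vmat D A)⁻¹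

/-- The residual likelihood
`L_RE(A) = det(XᵀV⁻¹X)^{−1/2} · det(V)^{−1/2} · exp(−yᵀP y/2)`. -/
noncomputable def LRE {m p : ℕ} (X : Matrix (Fin m) (Fin p) ℝ) (D : Fin m → ℝ)
    (y : Fin m → ℝ) (A : ℝ) : ℝ :=
  (Xᵀ * (Vmat D A)⁻¹ * X).det ^ (-(1 : ℝ) / 2) * (Vmat D A).det ^ (-(1 : ℝ) / 2) *
    Real.exp (-(y ⬝ᵥ (Pmat X D A *ᵥ y)) / 2)

/-! ### Auxiliary lemmas -/

lemma aux_one_le_det_one_add {n : ℕ} {M : Matrix (Fin n) (Fin n) ℝ} (hM : M.PosSemidef) :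
    1 ≤ (1 + M).det := by
  have hH := hM.1
  have hspec := hH.spectral_theorem
  set U : Matrix (Fin n) (Fin n) ℝ := (hH.eigenvectorUnitary : Matrix (Fin n) (Fin n) ℝ) with hU
  have hUmem : (hH.eigenvectorUnitary : Matrix (Fin n) (Fin n) ℝ) ∈ unitary _ :=
    hH.eigenvectorUnitary.prop
  have hUU : U * star U = 1 := Unitary.mul_star_self_of_mem hUmem
  have h1 : (1 : Matrix (Fin n) (Fin n) ℝ) + M
      = U * (1 + diagonal (RCLike.ofReal ∘ hH.eigenvalues)) * star U := by
    rw [mul_add, add_mul, mul_one, hUU]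
    conv_lhs => rw [hspec]
    rfl
  have hUdet : U.det * (star U).det = 1 := by rw [← det_mul, hUU, det_one]
  have hdet : (1 + M).det
      = ((1 : Matrix (Fin n) (Fin n) ℝ) + diagonal (RCLike.ofReal ∘ hH.eigenvalues)).det := by
    rw [h1, det_mul, det_mul]
    calc U.det * ((1 : Matrix (Fin n) (Fin n) ℝ)
          + diagonal (RCLike.ofReal ∘ hH.eigenvalues)).det * (star U).det
        = (U.det * (star U).det) * ((1 : Matrix (Fin n) (Fin n) ℝ)
          + diagonal (RCLike.ofReal ∘ hH.eigenvalues)).det := by ring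
      _ = _ := by rw [hUdet, one_mul]
  rw [hdet]
  have : (1 : Matrix (Fin n) (Fin n) ℝ) + diagonal (RCLike.ofReal ∘ hH.eigenvalues)
      = diagonal (fun i => 1 + hH.eigenvalues i) := by
    rw [← diagonal_one, diagonal_add]
    congr 1
  rw [this, det_diagonal]
  calc (1:ℝ) = ∏ _i : Fin n, 1 := by simp
    _ ≤ ∏ i : Fin n, (1 + hH.eigenvalues i) :=
        Finset.prod_le_prod (fun i _ => by norm_num)
          (fun i _ => by linarith [hM.eigenvalues_nonneg i])

open scoped MatrixOrder in
lemma aux_det_le_det_of_psd {n : ℕ} {A B : Matrix (Fin n) (Fin n) ℝ}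
    (hA : A.PosDef) (hBA : (B - A).PosSemidef) : A.det ≤ B.det := by
  set S := CFC.sqrt A with hSdef
  have hSsd : S.PosSemidef := (CFC.sqrt_nonneg A).posSemidef
  have hSS : S * S = A := CFC.sqrt_mul_sqrt_self A hA.posSemidef.nonneg
  have hdet2 : S.det * S.det = A.det := by rw [← det_mul, hSS]
  have hSne : S.det ≠ 0 := by
    intro h; rw [h, mul_zero] at hdet2; exact hA.det_pos.ne hdet2
  have hSu : IsUnit S.det := isUnit_iff_ne_zero.mpr hSne
  have hSinvH : (S⁻¹)ᴴ = S⁻¹ := by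
    rw [conjTranspose_nonsing_inv, hSsd.1.eq]
  have hMpsd : (S⁻¹ * (B - A) * S⁻¹).PosSemidef := by
    have := hBA.conjTranspose_mul_mul_same S⁻¹
    rwa [hSinvH] at this
  have hB : B = S * (1 + S⁻¹ * (B - A) * S⁻¹) * S := by
    have h1 : S * (1 + S⁻¹ * (B - A) * S⁻¹) * S
        = S * S + (S * S⁻¹) * (B - A) * (S⁻¹ * S) := by
      noncomm_ring
    rw [h1, mul_nonsing_inv S hSu, nonsing_inv_mul S hSu, one_mul, mul_one, hSS]
    abel
  calc A.det = A.det * 1 := (mul_one _).symm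
    _ ≤ A.det * (1 + S⁻¹ * (B - A) * S⁻¹).det :=
        mul_le_mul_of_nonneg_left (aux_one_le_det_one_add hMpsd) hA.det_pos.le
    _ = (S * (1 + S⁻¹ * (B - A) * S⁻¹) * S).det := by
        rw [det_mul, det_mul, ← hdet2]; ring
    _ = B.det := by rw [← hB]

lemma aux_mulVec_inj_of_rank {m p : ℕ} (X : Matrix (Fin m) (Fin p) ℝ) (hrank : X.rank = p) :
    Function.Injective X.mulVec := by
  have h := LinearMap.finrank_range_add_finrank_ker X.mulVecLin
  rw [Module.finrank_fin_fun] at h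
  have hr : Module.finrank ℝ (LinearMap.range X.mulVecLin) = p := hrank
  have hker : Module.finrank ℝ (LinearMap.ker X.mulVecLin) = 0 := by omega
  have : LinearMap.ker X.mulVecLin = ⊥ := Submodule.finrank_eq_zero.mp hker
  exact LinearMap.ker_eq_bot.mp this

lemma aux_posdef_XtDX {m p : ℕ} (X : Matrix (Fin m) (Fin p) ℝ)
    (hX : Function.Injective X.mulVec)
    {d : Fin m → ℝ} (hd : ∀ j, 0 < d j) : (Xᵀ * Matrix.diagonal d * X).PosDef := by
  have hdg : (Matrix.diagonal d).PosDef := Matrix.posDef_diagonal_iff.mpr hd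
  refine Matrix.PosDef.of_dotProduct_mulVec_pos ?_ ?_
  · have := isHermitian_conjTranspose_mul_mul X hdg.1
    rwa [conjTranspose_eq_transpose_of_trivial] at this
  · intro x hx
    have hXx : X *ᵥ x ≠ 0 := by
      intro h
      exact hx (hX (by rw [h, mulVec_zero]))
    have := hdg.dotProduct_mulVec_pos hXx
    rw [star_trivial] at this ⊢
    rw [← mulVec_mulVec, ← mulVec_mulVec, dotProduct_mulVec, vecMul_transpose]
    exact this

lemma aux_Vmat_inv {m : ℕ} (D : Fin m → ℝ) {A : ℝ} (hc : ∀ j, 0 < A + D j) :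
    (Vmat D A)⁻¹ = Matrix.diagonal (fun j => (A + D j)⁻¹) := by
  apply inv_eq_right_inv
  rw [Vmat, diagonal_mul_diagonal]
  have : (fun i => (A + D i) * (A + D i)⁻¹) = fun _ : Fin m => (1 : ℝ) :=
    funext fun j => mul_inv_cancel₀ (hc j).ne'
  rw [this, diagonal_one]

lemma aux_Gmat_posDef {m p : ℕ} (X : Matrix (Fin m) (Fin p) ℝ)
    (hX : Function.Injective X.mulVec) (D : Fin m → ℝ) {A : ℝ} (hc : ∀ j, 0 < A + D j) :
    (Xᵀ * (Vmat D A)⁻¹ * X).PosDef := by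
  rw [aux_Vmat_inv D hc]
  exact aux_posdef_XtDX X hX fun j => inv_pos.mpr (hc j)

lemma aux_residual_dot_nonneg {m p : ℕ} (M : Matrix (Fin m) (Fin p) ℝ)
    {G : Matrix (Fin p) (Fin p) ℝ} (hG : Mᵀ * M = G) (hGu : IsUnit G.det) (hGt : Gᵀ = G)
    (u : Fin m → ℝ) : 0 ≤ u ⬝ᵥ ((1 - M * G⁻¹ * Mᵀ) *ᵥ u) := by
  set Q : Matrix (Fin m) (Fin m) ℝ := M * G⁻¹ * Mᵀ with hQ
  have hQt : Qᵀ = Q := by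
    calc Qᵀ = (Mᵀ)ᵀ * (G⁻¹)ᵀ * Mᵀ := by
          rw [hQ, transpose_mul, transpose_mul, Matrix.mul_assoc]
      _ = Q := by rw [transpose_transpose, transpose_nonsing_inv, hGt, hQ]
  have hQQ : Q * Q = Q := by
    calc Q * Q = M * G⁻¹ * (Mᵀ * M) * (G⁻¹ * Mᵀ) := by
          rw [hQ]; simp only [Matrix.mul_assoc]
      _ = M * (G⁻¹ * G * G⁻¹) * Mᵀ := by rw [hG]; simp only [Matrix.mul_assoc]
      _ = Q := by rw [nonsing_inv_mul G hGu, Matrix.one_mul, hQ, Matrix.mul_assoc]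
  set R : Matrix (Fin m) (Fin m) ℝ := 1 - Q with hR
  have hRt : Rᵀ = R := by rw [hR, transpose_sub, transpose_one, hQt]
  have hRR : R * R = R := by
    rw [hR, Matrix.sub_mul, Matrix.one_mul, Matrix.mul_sub, Matrix.mul_one, hQQ]
    abel
  have h2 : u ⬝ᵥ (R *ᵥ u) = (R *ᵥ u) ⬝ᵥ (R *ᵥ u) := by
    calc u ⬝ᵥ (R *ᵥ u) = u ⬝ᵥ ((R * R) *ᵥ u) := by rw [hRR]
      _ = u ⬝ᵥ (R *ᵥ (R *ᵥ u)) := by rw [mulVec_mulVec]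
      _ = (R *ᵥ u) ⬝ᵥ (R *ᵥ u) := by
          rw [dotProduct_mulVec, ← mulVec_transpose, hRt]
  rw [h2]
  exact Finset.sum_nonneg fun i _ => mul_self_nonneg _

lemma aux_Pmat_dot_nonneg {m p : ℕ} (X : Matrix (Fin m) (Fin p) ℝ)
    (hX : Function.Injective X.mulVec) (D : Fin m → ℝ) {A : ℝ} (hc : ∀ j, 0 < A + D j)
    (y : Fin m → ℝ) : 0 ≤ y ⬝ᵥ (Pmat X D A *ᵥ y) := by
  have hww : ∀ j, (Real.sqrt (A + D j))⁻¹ * (Real.sqrt (A + D j))⁻¹ = (A + D j)⁻¹ := fun j => by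
    rw [← mul_inv, Real.mul_self_sqrt (hc j).le]
  set w : Fin m → ℝ := fun j => (Real.sqrt (A + D j))⁻¹ with hw
  set W : Matrix (Fin m) (Fin m) ℝ := Matrix.diagonal w with hWdef
  have hWW : W * W = (Vmat D A)⁻¹ := by
    rw [hWdef, diagonal_mul_diagonal, aux_Vmat_inv D hc]
    exact congrArg Matrix.diagonal (funext hww)
  have hWt : Wᵀ = W := diagonal_transpose w
  have hG : (W * X)ᵀ * (W * X) = Xᵀ * (Vmat D A)⁻¹ * X := by
    rw [transpose_mul, hWt, ← hWW]
    simp only [Matrix.mul_assoc]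
  have hGpd : (Xᵀ * (Vmat D A)⁻¹ * X).PosDef := aux_Gmat_posDef X hX D hc
  have hGu : IsUnit (Xᵀ * (Vmat D A)⁻¹ * X).det := hGpd.det_pos.ne'.isUnit
  have hGt : (Xᵀ * (Vmat D A)⁻¹ * X)ᵀ = Xᵀ * (Vmat D A)⁻¹ * X := by
    rw [← conjTranspose_eq_transpose_of_trivial, hGpd.1.eq]
  have hPW : Pmat X D A
      = W * ((1 - (W * X) * (Xᵀ * (Vmat D A)⁻¹ * X)⁻¹ * (W * X)ᵀ) * W) := by
    rw [Pmat, Matrix.sub_mul, Matrix.mul_sub, Matrix.one_mul, transpose_mul, hWt]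
    congr 1
    · exact hWW.symm
    · rw [← hWW]; simp only [Matrix.mul_assoc]
  rw [hPW]
  have h1 : y ⬝ᵥ ((W * ((1 - (W * X) * (Xᵀ * (Vmat D A)⁻¹ * X)⁻¹ * (W * X)ᵀ) * W)) *ᵥ y)
      = (W *ᵥ y) ⬝ᵥ ((1 - (W * X) * (Xᵀ * (Vmat D A)⁻¹ * X)⁻¹ * (W * X)ᵀ) *ᵥ (W *ᵥ y)) := by
    rw [← mulVec_mulVec, dotProduct_mulVec, ← mulVec_transpose, hWt, ← mulVec_mulVec]
  rw [h1]
  exact aux_residual_dot_nonneg (W * X) hG hGu hGt (W *ᵥ y)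

lemma aux_LRE_le {m p : ℕ} (X : Matrix (Fin m) (Fin p) ℝ)
    (hinj : Function.Injective X.mulVec) (D : Fin m → ℝ) (hD : ∀ j, 0 < D j)
    {A : ℝ} (hA : 0 < A) (y : Fin m → ℝ) {Dmax Dmin : ℝ}
    (hmaxle : ∀ j, D j ≤ Dmax) (hminle : ∀ j, Dmin ≤ D j)
    (hDminpos : 0 < Dmin) (hDmaxpos : 0 < Dmax) :
    LRE X D y A ≤
      ((A + Dmax) ^ ((p:ℝ)/2) * (Xᵀ * X).det ^ (-(1:ℝ)/2)) * (A + Dmin) ^ (-(m:ℝ)/2) := by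
  have hc : ∀ j, 0 < A + D j := fun j => by linarith [hD j]
  have hcmin : 0 < A + Dmin := by linarith
  have hcmax : 0 < A + Dmax := by linarith
  have hGpd : (Xᵀ * (Vmat D A)⁻¹ * X).PosDef := aux_Gmat_posDef X hinj D hc
  have hXX : (Xᵀ * X).PosDef := by
    have := aux_posdef_XtDX X hinj (d := fun _ : Fin m => (1:ℝ)) (fun _ => one_pos)
    rwa [show Matrix.diagonal (fun _ : Fin m => (1:ℝ)) = 1 from diagonal_one,
      Matrix.mul_one] at this
  have hdXX : 0 < (Xᵀ * X).det := hXX.det_pos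
  -- lower bound on det of G
  have hsmul : ((A + Dmax)⁻¹ • (Xᵀ * X))
      = Xᵀ * Matrix.diagonal (fun _ : Fin m => (A + Dmax)⁻¹) * X := by
    rw [← smul_one_eq_diagonal, Matrix.mul_smul, Matrix.smul_mul, Matrix.mul_one]
  have hApd : ((A + Dmax)⁻¹ • (Xᵀ * X)).PosDef := by
    rw [hsmul]
    exact aux_posdef_XtDX X hinj (fun _ => inv_pos.mpr hcmax)
  have hdiff : ((Xᵀ * (Vmat D A)⁻¹ * X) - (A + Dmax)⁻¹ • (Xᵀ * X)).PosSemidef := by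
    have heq : (Xᵀ * (Vmat D A)⁻¹ * X) - (A + Dmax)⁻¹ • (Xᵀ * X)
        = Xᵀ * Matrix.diagonal (fun j => (A + D j)⁻¹ - (A + Dmax)⁻¹) * X := by
      rw [hsmul, aux_Vmat_inv D hc, ← diagonal_sub, Matrix.mul_sub, Matrix.sub_mul]
    rw [heq]
    have hpsd : (Matrix.diagonal (fun j => (A + D j)⁻¹ - (A + Dmax)⁻¹)).PosSemidef := by
      refine Matrix.PosSemidef.diagonal fun j => ?_
      have : (A + Dmax)⁻¹ ≤ (A + D j)⁻¹ :=
        one_div (A + Dmax) ▸ one_div (A + D j) ▸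
          one_div_le_one_div_of_le (hc j) (by linarith [hmaxle j])
      show (0:ℝ) ≤ (A + D j)⁻¹ - (A + Dmax)⁻¹
      linarith
    have := hpsd.conjTranspose_mul_mul_same X
    rwa [conjTranspose_eq_transpose_of_trivial] at this
  have hkey : ((A + Dmax)⁻¹) ^ p * (Xᵀ * X).det ≤ (Xᵀ * (Vmat D A)⁻¹ * X).det := by
    have := aux_det_le_det_of_psd hApd hdiff
    rwa [det_smul, Fintype.card_fin] at this
  have hlowpos : 0 < ((A + Dmax)⁻¹) ^ p * (Xᵀ * X).det :=
    mul_pos (pow_pos (inv_pos.mpr hcmax) p) hdXX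
  -- bound 1
  have hb1 : (Xᵀ * (Vmat D A)⁻¹ * X).det ^ (-(1:ℝ)/2)
      ≤ (A + Dmax) ^ ((p:ℝ)/2) * (Xᵀ * X).det ^ (-(1:ℝ)/2) := by
    have h0 : (Xᵀ * (Vmat D A)⁻¹ * X).det ^ (-(1:ℝ)/2)
        ≤ (((A + Dmax)⁻¹) ^ p * (Xᵀ * X).det) ^ (-(1:ℝ)/2) :=
      Real.rpow_le_rpow_of_nonpos hlowpos hkey (by norm_num)
    have h1 : (((A + Dmax)⁻¹ : ℝ) ^ p : ℝ) = (A + Dmax) ^ (-(p:ℝ)) := by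
      rw [← Real.rpow_natCast ((A + Dmax)⁻¹) p, ← Real.rpow_neg_one (A + Dmax),
        ← Real.rpow_mul hcmax.le]
      norm_num
    have h2 : ((A + Dmax) ^ (-(p:ℝ))) ^ (-(1:ℝ)/2) = (A + Dmax) ^ ((p:ℝ)/2) := by
      rw [← Real.rpow_mul hcmax.le]
      congr 1; ring
    rwa [h1, Real.mul_rpow (Real.rpow_nonneg hcmax.le _) hdXX.le, h2] at h0
  -- bound 2
  have hVdet : (Vmat D A).det = ∏ j : Fin m, (A + D j) := by rw [Vmat, det_diagonal]
  have hVlow : (A + Dmin) ^ m ≤ (Vmat D A).det := by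
    rw [hVdet]
    calc (A + Dmin) ^ m = ∏ _j : Fin m, (A + Dmin) := by
          rw [Finset.prod_const, Finset.card_univ, Fintype.card_fin]
      _ ≤ ∏ j : Fin m, (A + D j) :=
          Finset.prod_le_prod (fun _ _ => hcmin.le) (fun j _ => by linarith [hminle j])
  have hVpos : 0 < (Vmat D A).det := lt_of_lt_of_le (pow_pos hcmin m) hVlow
  have hb2 : (Vmat D A).det ^ (-(1:ℝ)/2) ≤ (A + Dmin) ^ (-(m:ℝ)/2) := by
    have h0 : (Vmat D A).det ^ (-(1:ℝ)/2) ≤ ((A + Dmin) ^ m) ^ (-(1:ℝ)/2) :=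
      Real.rpow_le_rpow_of_nonpos (pow_pos hcmin m) hVlow (by norm_num)
    have h1 : (((A + Dmin) ^ m : ℝ)) ^ (-(1:ℝ)/2) = (A + Dmin) ^ (-(m:ℝ)/2) := by
      rw [← Real.rpow_natCast (A + Dmin) m, ← Real.rpow_mul hcmin.le]
      congr 1; ring
    rwa [h1] at h0
  -- bound 3
  have hq : 0 ≤ y ⬝ᵥ (Pmat X D A *ᵥ y) := aux_Pmat_dot_nonneg X hinj D hc y
  have hb3 : Real.exp (-(y ⬝ᵥ (Pmat X D A *ᵥ y)) / 2) ≤ 1 :=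
    Real.exp_le_one_iff.mpr (by linarith)
  -- combine
  rw [LRE]
  have hB1nn : 0 ≤ (A + Dmax) ^ ((p:ℝ)/2) * (Xᵀ * X).det ^ (-(1:ℝ)/2) :=
    mul_nonneg (Real.rpow_nonneg hcmax.le _) (Real.rpow_nonneg hdXX.le _)
  have step1 : (Xᵀ * (Vmat D A)⁻¹ * X).det ^ (-(1:ℝ)/2) * (Vmat D A).det ^ (-(1:ℝ)/2)
      ≤ ((A + Dmax) ^ ((p:ℝ)/2) * (Xᵀ * X).det ^ (-(1:ℝ)/2)) * (A + Dmin) ^ (-(m:ℝ)/2) :=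
    mul_le_mul hb1 hb2 (Real.rpow_nonneg hVpos.le _) hB1nn
  calc (Xᵀ * (Vmat D A)⁻¹ * X).det ^ (-(1:ℝ)/2) * (Vmat D A).det ^ (-(1:ℝ)/2) *
        Real.exp (-(y ⬝ᵥ (Pmat X D A *ᵥ y)) / 2)
      ≤ (((A + Dmax) ^ ((p:ℝ)/2) * (Xᵀ * X).det ^ (-(1:ℝ)/2)) * (A + Dmin) ^ (-(m:ℝ)/2)) * 1 :=
        mul_le_mul step1 hb3 (Real.exp_pos _).le
          (mul_nonneg hB1nn (Real.rpow_nonneg hcmin.le _))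
    _ = ((A + Dmax) ^ ((p:ℝ)/2) * (Xᵀ * X).det ^ (-(1:ℝ)/2)) * (A + Dmin) ^ (-(m:ℝ)/2) :=
        mul_one _

lemma aux_isBigO {d1 d2 d3 : ℝ} (C : ℝ) (h1 : 0 < d1) (h2 : 0 < d2) (h3 : 0 < d3)
    (e1 e2 e3 e4 E : ℝ) (hsum : e1 + e2 + e3 + e4 = E) :
    (fun A : ℝ => C * A ^ e1 * (A + d1) ^ e2 * (A + d2) ^ e3 * (A + d3) ^ e4)
      =O[Filter.atTop] (fun A : ℝ => A ^ E) := by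
  apply Asymptotics.isBigO_of_div_tendsto_nhds (c := C * (1 ^ e2 * (1 ^ e3 * 1 ^ e4)))
  · filter_upwards [eventually_gt_atTop (0:ℝ)] with A hA h
    exact absurd h (Real.rpow_pos_of_pos hA E).ne'
  · have hone : ∀ d : ℝ, 0 < d →
        Tendsto (fun A : ℝ => 1 + d / A) atTop (nhds 1) := by
      intro d _
      have : Tendsto (fun A : ℝ => d / A) atTop (nhds 0) :=
        Tendsto.div_atTop tendsto_const_nhds tendsto_id
      simpa using tendsto_const_nhds.add this
    have hlim : Tendsto (fun A : ℝ =>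
        C * ((1 + d1 / A) ^ e2 * ((1 + d2 / A) ^ e3 * (1 + d3 / A) ^ e4))) atTop
        (nhds (C * (1 ^ e2 * (1 ^ e3 * 1 ^ e4)))) := by
      exact tendsto_const_nhds.mul
        (((hone d1 h1).rpow_const (Or.inl one_ne_zero)).mul
          (((hone d2 h2).rpow_const (Or.inl one_ne_zero)).mul
            ((hone d3 h3).rpow_const (Or.inl one_ne_zero))))
    refine Tendsto.congr' ?_ hlim
    filter_upwards [eventually_gt_atTop (0:ℝ)] with A hA
    have key : ∀ d e : ℝ, 0 < d → (A + d) ^ e = A ^ e * (1 + d / A) ^ e := by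
      intro d e hd
      rw [show A + d = A * (1 + d / A) by field_simp, Real.mul_rpow hA.le (by positivity)]
    have hApow : A ^ e1 * A ^ e2 * A ^ e3 * A ^ e4 = A ^ E := by
      rw [← Real.rpow_add hA, ← Real.rpow_add hA, ← Real.rpow_add hA, hsum]
    have hne : A ^ E ≠ 0 := (Real.rpow_pos_of_pos hA E).ne'
    show C * ((1 + d1 / A) ^ e2 * ((1 + d2 / A) ^ e3 * (1 + d3 / A) ^ e4))
        = (C * A ^ e1 * (A + d1) ^ e2 * (A + d2) ^ e3 * (A + d3) ^ e4) / A ^ E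
    rw [key d1 e2 h1, key d2 e3 h2, key d3 e4 h3, eq_div_iff hne, ← hApow]
    ring

/-- Tail decay of the adjusted likelihood for `I^{(c)}`: the function
`A^{(1+z²)/4}·(A+D_i)^{(7−z²)/4}·L_RE(A)` is bounded above by
`det(XᵀX)^{−1/2}·A^{(1+z²)/4}·(A+D_i)^{(7−z²)/4}·(A+max_j D_j)^{p/2}·(A+min_j D_j)^{−m/2}`,
which is `O(A^{2−(m−p)/2})` as `A → ∞`; in particular, if `m > p + 4`, then
`A^{(1+z²)/4}·(A+D_i)^{(7−z²)/4}·L_RE(A) → 0` as `A → ∞`. -/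
theorem c_adjusted_likelihood_tail {m p : ℕ} (hm : 0 < m) (hp : 0 < p)
    (X : Matrix (Fin m) (Fin p) ℝ) (hrank : X.rank = p)
    (D : Fin m → ℝ) (hD : ∀ j, 0 < D j)
    (z : ℝ) (y : Fin m → ℝ) (i : Fin m)
    (Dmax Dmin : ℝ)
    (hDmax : Dmax =
      Finset.univ.sup' (Finset.univ_nonempty_iff.mpr (Fin.pos_iff_nonempty.mp hm)) D)
    (hDmin : Dmin =
      Finset.univ.inf' (Finset.univ_nonempty_iff.mpr (Fin.pos_iff_nonempty.mp hm)) D) :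
    (∀ A : ℝ, 0 < A →
      A ^ ((1 + z ^ 2) / 4) * (A + D i) ^ ((7 - z ^ 2) / 4) * LRE X D y A ≤
        (Xᵀ * X).det ^ (-(1 : ℝ) / 2) * A ^ ((1 + z ^ 2) / 4) *
          (A + D i) ^ ((7 - z ^ 2) / 4) * (A + Dmax) ^ ((p : ℝ) / 2) *
            (A + Dmin) ^ (-(m : ℝ) / 2)) ∧
    (fun A : ℝ =>
        (Xᵀ * X).det ^ (-(1 : ℝ) / 2) * A ^ ((1 + z ^ 2) / 4) *
          (A + D i) ^ ((7 - z ^ 2) / 4) * (A + Dmax) ^ ((p : ℝ) / 2) *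
            (A + Dmin) ^ (-(m : ℝ) / 2))
      =O[Filter.atTop] (fun A : ℝ => A ^ (2 - ((m : ℝ) - (p : ℝ)) / 2)) ∧
    (m > p + 4 →
      Filter.Tendsto
        (fun A : ℝ => A ^ ((1 + z ^ 2) / 4) * (A + D i) ^ ((7 - z ^ 2) / 4) * LRE X D y A)
        Filter.atTop (nhds 0)) := by
  have hinj := aux_mulVec_inj_of_rank X hrank
  have hne : (Finset.univ : Finset (Fin m)).Nonempty :=
    Finset.univ_nonempty_iff.mpr (Fin.pos_iff_nonempty.mp hm)
  have hmaxle : ∀ j, D j ≤ Dmax := fun j => hDmax ▸ Finset.le_sup' D (Finset.mem_univ j)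
  have hminle : ∀ j, Dmin ≤ D j := fun j => hDmin ▸ Finset.inf'_le D (Finset.mem_univ j)
  obtain ⟨jmin, -, hjmin⟩ := Finset.exists_mem_eq_inf' hne D
  have hDminpos : 0 < Dmin := by
    rw [hDmin, hjmin]; exact hD jmin
  have hDmaxpos : 0 < Dmax := lt_of_lt_of_le hDminpos (le_trans (hminle ⟨0, hm⟩) (hmaxle ⟨0, hm⟩))
  have part1 : ∀ A : ℝ, 0 < A →
      A ^ ((1 + z ^ 2) / 4) * (A + D i) ^ ((7 - z ^ 2) / 4) * LRE X D y A ≤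
        (Xᵀ * X).det ^ (-(1 : ℝ) / 2) * A ^ ((1 + z ^ 2) / 4) *
          (A + D i) ^ ((7 - z ^ 2) / 4) * (A + Dmax) ^ ((p : ℝ) / 2) *
            (A + Dmin) ^ (-(m : ℝ) / 2) := by
    intro A hA
    have hb := aux_LRE_le X hinj D hD hA y hmaxle hminle hDminpos hDmaxpos
    have hK : 0 ≤ A ^ ((1 + z ^ 2) / 4) * (A + D i) ^ ((7 - z ^ 2) / 4) :=
      mul_nonneg (Real.rpow_nonneg hA.le _)
        (Real.rpow_nonneg (by linarith [hD i]) _)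
    calc A ^ ((1 + z ^ 2) / 4) * (A + D i) ^ ((7 - z ^ 2) / 4) * LRE X D y A
        ≤ A ^ ((1 + z ^ 2) / 4) * (A + D i) ^ ((7 - z ^ 2) / 4) *
            (((A + Dmax) ^ ((p:ℝ)/2) * (Xᵀ * X).det ^ (-(1:ℝ)/2)) * (A + Dmin) ^ (-(m:ℝ)/2)) :=
          mul_le_mul_of_nonneg_left hb hK
      _ = (Xᵀ * X).det ^ (-(1 : ℝ) / 2) * A ^ ((1 + z ^ 2) / 4) *
          (A + D i) ^ ((7 - z ^ 2) / 4) * (A + Dmax) ^ ((p : ℝ) / 2) *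
            (A + Dmin) ^ (-(m : ℝ) / 2) := by ring
  have hbig := aux_isBigO ((Xᵀ * X).det ^ (-(1:ℝ)/2)) (hD i) hDmaxpos hDminpos
    ((1 + z ^ 2) / 4) ((7 - z ^ 2) / 4) ((p:ℝ)/2) (-(m:ℝ)/2)
    (2 - ((m : ℝ) - (p : ℝ)) / 2) (by ring)
  refine ⟨part1, hbig, ?_⟩
  intro hmp
  have hcast : ((p : ℝ) + 4) < (m : ℝ) := by
    have : ((p + 4 : ℕ) : ℝ) < (m : ℝ) := Nat.cast_lt.mpr hmp
    push_cast at this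
    linarith
  have hE : 2 - ((m : ℝ) - (p : ℝ)) / 2 < 0 := by linarith
  have h0 : Tendsto (fun A : ℝ => A ^ (2 - ((m : ℝ) - (p : ℝ)) / 2)) atTop (nhds 0) := by
    have := tendsto_rpow_neg_atTop (y := -(2 - ((m : ℝ) - (p : ℝ)) / 2)) (by linarith)
    simpa using this
  have hb0 := hbig.trans_tendsto h0
  refine squeeze_zero' ?_ ?_ hb0
  · filter_upwards [eventually_gt_atTop (0:ℝ)] with A hA
    have hc : ∀ j, 0 < A + D j := fun j => by linarith [hD j]
    have hGpd : (Xᵀ * (Vmat D A)⁻¹ * X).PosDef := aux_Gmat_posDef X hinj D hc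
    have hVpos : 0 < (Vmat D A).det := by
      rw [Vmat, det_diagonal]
      exact Finset.prod_pos fun j _ => hc j
    have hLRE : 0 ≤ LRE X D y A := by
      rw [LRE]
      exact mul_nonneg (mul_nonneg (Real.rpow_nonneg hGpd.det_pos.le _)
        (Real.rpow_nonneg hVpos.le _)) (Real.exp_pos _).le
    exact mul_nonneg (mul_nonneg (Real.rpow_nonneg hA.le _)
      (Real.rpow_nonneg (by linarith [hD i]) _)) hLRE
  · filter_upwards [eventually_gt_atTop (0:ℝ)] with A hA
    exact part1 A hA
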